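/- Let X be a real Banach space and Y a finite-dimensional subspace of X. If the norm of the quotient space X/Y is weakly average non rough, then the norm of X is weakly average non rough. -/

import Mathlib

open Metric NormedSpace ENNReal

section Defs

variable (Z : Type*) [NormedAddCommGroup Z] [NormedSpace ℝ Z]

/-- The w*-slice of the closed unit ball of the dual of `Z` determined by `z : Z` and `α > 0`:
`S(B_{Z*}, z, α) = {f ∈ B_{Z*} : f(z) > sup_{g ∈ B_{Z*}} g(z) − α}`. -/
def wStarSlice (z : Z) (α : ℝ) : Set (StrongDual ℝ Z) :=
  {f | f ∈ closedBall (0 : StrongDual ℝ Z) 1 ∧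
    f z > sSup ((fun g : StrongDual ℝ Z => g z) '' closedBall (0 : StrongDual ℝ Z) 1) - α}

/-- The norm of `Z` is `ε`-rough: every w*-slice of `B_{Z*}` has diameter at least `ε`. -/
def EpsRough (ε : ℝ) : Prop :=
  ∀ (z : Z) (α : ℝ), 0 < α → ε ≤ diam (wStarSlice Z z α)

/-- The norm of `Z` is non rough: it is not `ε`-rough for any `ε > 0`. -/
def NonRough : Prop := ∀ ε > 0, ¬ EpsRough Z ε

/-- `Z*` has the w*-Ball Dentable Property. -/
def WStarBDP : Prop :=
  ∀ ε > 0, ∃ (z : Z) (α : ℝ), 0 < α ∧ diam (wStarSlice Z z α) < ε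

/-- `V` is a (relatively) w*-open subset of the closed unit ball `B_{Z*}`. -/
def IsRelWStarOpen (V : Set (StrongDual ℝ Z)) : Prop :=
  ∃ U : Set (WeakDual ℝ Z), IsOpen U ∧
    V = {f | f ∈ closedBall (0 : StrongDual ℝ Z) 1 ∧ StrongDual.toWeakDual f ∈ U}

/-- The norm of `Z` is weakly `ε`-average rough: every nonempty relatively w*-open
subset of `B_{Z*}` has diameter at least `ε`. -/
def WeaklyEpsAvgRough (ε : ℝ) : Prop :=
  ∀ V : Set (StrongDual ℝ Z), IsRelWStarOpen Z V → V.Nonempty → ε ≤ diam V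

/-- The norm of `Z` is weakly average non rough. -/
def WeaklyAvgNonRough : Prop := ∀ ε > 0, ¬ WeaklyEpsAvgRough Z ε

/-- `Z*` has the w*-Ball Huskable Property. -/
def WStarBHP : Prop :=
  ∀ ε > 0, ∃ V : Set (StrongDual ℝ Z), IsRelWStarOpen Z V ∧ V.Nonempty ∧ diam V < ε

/-- `D` is a convex combination of w*-slices of `B_{Z*}`, i.e. `D = ∑ λᵢ Sᵢ` (Minkowski sum)
with each `Sᵢ` a w*-slice, `λᵢ > 0`, `∑ λᵢ = 1`. -/
def IsConvexCombWStarSlices (D : Set (StrongDual ℝ Z)) : Prop :=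
  ∃ (n : ℕ) (l : Fin n → ℝ) (z : Fin n → Z) (α : Fin n → ℝ),
    (∀ i, 0 < l i) ∧ (∑ i, l i) = 1 ∧ (∀ i, 0 < α i) ∧
    D = {f | ∃ g : Fin n → StrongDual ℝ Z,
      (∀ i, g i ∈ wStarSlice Z (z i) (α i)) ∧ f = ∑ i, l i • g i}

/-- The norm of `Z` is `ε`-average rough: every convex combination of w*-slices of `B_{Z*}`
has diameter at least `ε`. -/
def EpsAvgRough (ε : ℝ) : Prop :=
  ∀ D : Set (StrongDual ℝ Z), IsConvexCombWStarSlices Z D → ε ≤ diam D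

/-- The norm of `Z` is average non rough. -/
def AvgNonRough : Prop := ∀ ε > 0, ¬ EpsAvgRough Z ε

/-- `Z*` has the w*-Ball Small Combination of Slice Property. -/
def WStarBSCSP : Prop :=
  ∀ ε > 0, ∃ D : Set (StrongDual ℝ Z), IsConvexCombWStarSlices Z D ∧ diam D < ε

/-- A slice of the closed unit ball `B_Z` determined by `f ∈ Z*` and `α > 0`. -/
def ballSlice (f : StrongDual ℝ Z) (α : ℝ) : Set Z :=
  {x | x ∈ closedBall (0 : Z) 1 ∧ f x > sSup (f '' closedBall (0 : Z) 1) - α}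

/-- `Z` has the Ball Dentable Property. -/
def BDP : Prop :=
  ∀ ε > 0, ∃ (f : StrongDual ℝ Z) (α : ℝ), 0 < α ∧ diam (ballSlice Z f α) < ε

/-- `V` is a nonempty relatively weakly open subset of the closed unit ball `B_Z`. -/
def IsRelWeakOpen (V : Set Z) : Prop :=
  ∃ U : Set (WeakSpace ℝ Z), IsOpen U ∧
    V = {x | x ∈ closedBall (0 : Z) 1 ∧ toWeakSpace ℝ Z x ∈ U}

/-- `Z` has the Ball Huskable Property. -/
def BHP : Prop :=
  ∀ ε > 0, ∃ V : Set Z, IsRelWeakOpen Z V ∧ V.Nonempty ∧ diam V < ε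

/-- `D` is a convex combination of slices of `B_Z`. -/
def IsConvexCombSlices (D : Set Z) : Prop :=
  ∃ (n : ℕ) (l : Fin n → ℝ) (f : Fin n → StrongDual ℝ Z) (α : Fin n → ℝ),
    (∀ i, 0 < l i) ∧ (∑ i, l i) = 1 ∧ (∀ i, 0 < α i) ∧
    D = {x | ∃ g : Fin n → Z,
      (∀ i, g i ∈ ballSlice Z (f i) (α i)) ∧ x = ∑ i, l i • g i}

/-- `Z` has the Ball Small Combination of Slice Property. -/
def BSCSP : Prop :=
  ∀ ε > 0, ∃ D : Set Z, IsConvexCombSlices Z D ∧ diam D < ε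

variable {Z}

/-- The closed unit ball of a subspace `F` of the dual, viewed as a subset of the dual. -/
def subBall (F : Submodule ℝ (StrongDual ℝ Z)) : Set (StrongDual ℝ Z) :=
  {f | f ∈ F ∧ ‖f‖ ≤ 1}

/-- The w*-slice of `B_F` determined by `z : Z` and `α`. -/
def subWStarSlice (F : Submodule ℝ (StrongDual ℝ Z)) (z : Z) (α : ℝ) : Set (StrongDual ℝ Z) :=
  {f | f ∈ subBall F ∧ f z > sSup ((fun g : StrongDual ℝ Z => g z) '' subBall F) - α}

/-- The subspace `F` of `Z*` has the w*-Ball Dentable Property. -/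
def SubWStarBDP (F : Submodule ℝ (StrongDual ℝ Z)) : Prop :=
  ∀ ε > 0, ∃ (z : Z) (α : ℝ), 0 < α ∧ diam (subWStarSlice F z α) < ε

/-- `V` is a relatively w*-open subset of `B_F`. -/
def IsRelWStarOpenSub (F : Submodule ℝ (StrongDual ℝ Z)) (V : Set (StrongDual ℝ Z)) : Prop :=
  ∃ U : Set (WeakDual ℝ Z), IsOpen U ∧
    V = {f | f ∈ subBall F ∧ StrongDual.toWeakDual f ∈ U}

/-- The subspace `F` of `Z*` has the w*-Ball Huskable Property. -/
def SubWStarBHP (F : Submodule ℝ (StrongDual ℝ Z)) : Prop :=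
  ∀ ε > 0, ∃ V : Set (StrongDual ℝ Z), IsRelWStarOpenSub F V ∧ V.Nonempty ∧ diam V < ε

/-- `D` is a convex combination of w*-slices of `B_F`. -/
def IsConvexCombSubWStarSlices (F : Submodule ℝ (StrongDual ℝ Z)) (D : Set (StrongDual ℝ Z)) : Prop :=
  ∃ (n : ℕ) (l : Fin n → ℝ) (z : Fin n → Z) (α : Fin n → ℝ),
    (∀ i, 0 < l i) ∧ (∑ i, l i) = 1 ∧ (∀ i, 0 < α i) ∧
    D = {f | ∃ g : Fin n → StrongDual ℝ Z,
      (∀ i, g i ∈ subWStarSlice F (z i) (α i)) ∧ f = ∑ i, l i • g i}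

/-- The subspace `F` of `Z*` has the w*-Ball Small Combination of Slice Property. -/
def SubWStarBSCSP (F : Submodule ℝ (StrongDual ℝ Z)) : Prop :=
  ∀ ε > 0, ∃ D : Set (StrongDual ℝ Z), IsConvexCombSubWStarSlices F D ∧ diam D < ε

/-- The annihilator `Y^⊥ = {f ∈ Z* : f(y) = 0 for all y ∈ Y}` of a subspace `Y` of `Z`. -/
noncomputable def annih (Y : Submodule ℝ Z) : Submodule ℝ (StrongDual ℝ Z) where
  carrier := {f | ∀ y ∈ Y, f y = 0}
  add_mem' := by intro f g hf hg y hy; simp [hf y hy, hg y hy]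
  zero_mem' := by intro y hy; simp
  smul_mem' := by intro c f hf y hy; simp [hf y hy]

end Defs

section AuxLemmas

/-- Every w*-open set around a point contains a basic finite-evaluation neighborhood. -/
lemma weakdual_basic_nbhd {Z : Type*} [NormedAddCommGroup Z] [NormedSpace ℝ Z]
    {U : Set (WeakDual ℝ Z)} (hU : IsOpen U) {g₀ : WeakDual ℝ Z} (hg : g₀ ∈ U) :
    ∃ (s : Finset Z) (δ : ℝ), 0 < δ ∧
      {g : WeakDual ℝ Z | ∀ z ∈ s, |g z - g₀ z| < δ} ⊆ U := by
  have hind : Topology.IsInducing (fun (g : WeakDual ℝ Z) (z : Z) => g z) := ⟨rfl⟩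
  obtain ⟨t, ht, rfl⟩ := hind.isOpen_iff.mp hU
  obtain ⟨I, u, h1, h2⟩ := isOpen_pi_iff.mp ht _ hg
  have key : ∀ z : Z, ∃ d : ℝ, 0 < d ∧ (z ∈ I → Metric.ball (g₀ z) d ⊆ u z) := by
    intro z
    by_cases hz : z ∈ I
    · obtain ⟨d, hd, hball⟩ := Metric.isOpen_iff.mp (h1 z hz).1 _ (h1 z hz).2
      exact ⟨d, hd, fun _ => hball⟩
    · exact ⟨1, one_pos, fun h => absurd h hz⟩
  choose d hd hball using key
  by_cases hI : I.Nonempty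
  · refine ⟨I, I.inf' hI d, (Finset.lt_inf'_iff hI).mpr fun z _ => hd z, ?_⟩
    intro g hg'
    apply h2
    intro z hz
    have hz' : z ∈ I := hz
    refine hball z hz' (Metric.mem_ball.mpr ?_)
    rw [Real.dist_eq]
    exact lt_of_lt_of_le (hg' z hz') (Finset.inf'_le d hz')
  · refine ⟨∅, 1, one_pos, fun g _ => h2 fun z hz => ?_⟩
    exact absurd (Finset.mem_coe.mp hz) (fun h => hI ⟨z, h⟩)

end AuxLemmas

set_option maxHeartbeats 8000000 in
/-- If `Y` is a finite-dimensional subspace of a Banach space `X` and the norm of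
`X/Y` is weakly average non rough, then the norm of `X` is weakly average non rough. -/
theorem statement_17 (X : Type*) [NormedAddCommGroup X] [NormedSpace ℝ X] [CompleteSpace X]
    (Y : Submodule ℝ X) [FiniteDimensional ℝ Y] :
    letI : IsClosed (Y : Set X) := Y.closed_of_finiteDimensional
    WeaklyAvgNonRough (X ⧸ Y) → WeaklyAvgNonRough X := by
  intro hq ε hε hrough
  letI : IsClosed (Y : Set X) := Y.closed_of_finiteDimensional
  apply hq (ε/4) (by linarith)
  intro V hVopen hVne
  by_contra hVd
  push_neg at hVd
  obtain ⟨U₀, hU₀open, hVeq⟩ := hVopen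
  obtain ⟨g₀, hg₀V⟩ := hVne
  rw [hVeq] at hg₀V
  obtain ⟨hg₀ball, hg₀U⟩ := hg₀V
  have hg₀norm : ‖g₀‖ ≤ 1 := mem_closedBall_zero_iff.mp hg₀ball
  obtain ⟨J, δ, hδ, hbasic⟩ := weakdual_basic_nbhd hU₀open hg₀U
  -- the quotient map as a continuous linear map
  set Q : X →L[ℝ] X ⧸ Y := LinearMap.mkContinuous Y.mkQ 1
    (fun x => by simpa using Submodule.Quotient.norm_mk_le Y x) with hQdef
  have hQx : ∀ x : X, Q x = Submodule.Quotient.mk x := fun _ => rfl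
  have hQnorm : ‖Q‖ ≤ 1 := LinearMap.mkContinuous_norm_le _ zero_le_one _
  have hcomp_le : ∀ g : StrongDual ℝ (X ⧸ Y), ‖g.comp Q‖ ≤ ‖g‖ := fun g =>
    (g.opNorm_comp_le Q).trans (by nlinarith [norm_nonneg g])
  -- lifts of quotient elements
  have hsurj : Function.Surjective (Submodule.Quotient.mk : X → X ⧸ Y) :=
    Submodule.Quotient.mk_surjective Y
  choose xq hxq using hsurj
  set M : ℝ := 1 + ∑ q ∈ J, ‖xq q‖ with hM
  have hM1 : 1 ≤ M := le_add_of_nonneg_right (Finset.sum_nonneg fun q _ => norm_nonneg _)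
  have hMb : ∀ q ∈ J, ‖xq q‖ ≤ M := fun q hq' =>
    (Finset.single_le_sum (fun i _ => norm_nonneg (xq i)) hq').trans
      (le_add_of_nonneg_left zero_le_one)
  set η : ℝ := min (ε/16) (δ/(8*M)) with hηdef
  have hη0 : 0 < η := lt_min (by linarith) (div_pos hδ (by linarith))
  have hη1 : η ≤ ε/16 := min_le_left _ _
  have hη2 : η ≤ δ/(8*M) := min_le_right _ _
  have hηM : 4 * (η * M) ≤ δ / 2 := by
    have hMpos : (0:ℝ) < M := by linarith
    have : η * M ≤ δ/8 := by
      calc η * M ≤ (δ/(8*M)) * M := mul_le_mul_of_nonneg_right hη2 (by linarith)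
      _ = δ/8 := by field_simp
    linarith
  -- a finite η-net of the unit ball of Y
  have hcpt : IsCompact (Metric.closedBall (0 : Y) 1) := isCompact_closedBall _ _
  obtain ⟨t, ht⟩ := hcpt.elim_finite_subcover (fun y : Y => Metric.ball y η)
    (fun y => Metric.isOpen_ball)
    (fun u _ => Set.mem_iUnion.mpr ⟨u, Metric.mem_ball_self hη0⟩)
  -- the w*-open subset of the dual ball of X
  set U' : Set (WeakDual ℝ X) :=
    (⋂ q ∈ J, (fun f : WeakDual ℝ X => f (xq q)) ⁻¹' (Metric.ball (g₀ q) (δ/2))) ∩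
    (⋂ y ∈ t, (fun f : WeakDual ℝ X => f (y : X)) ⁻¹' (Metric.ball (0:ℝ) η)) with hU'def
  have hU'open : IsOpen U' := by
    refine IsOpen.inter (isOpen_biInter_finset fun q _ => ?_)
      (isOpen_biInter_finset fun y _ => ?_)
    · exact Metric.isOpen_ball.preimage (WeakDual.eval_continuous (xq q))
    · exact Metric.isOpen_ball.preimage (WeakDual.eval_continuous ((y : X)))
  have hU'mem : ∀ f : StrongDual ℝ X, StrongDual.toWeakDual f ∈ U' ↔
      ((∀ q ∈ J, |f (xq q) - g₀ q| < δ/2) ∧ ∀ y ∈ t, |f (y : X)| < η) := by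
    intro f
    constructor
    · rintro ⟨h1, h2⟩
      refine ⟨fun q hq' => ?_, fun y hy => ?_⟩
      · have := Set.mem_iInter₂.mp h1 q hq'
        simpa [Real.dist_eq] using this
      · have := Set.mem_iInter₂.mp h2 y hy
        simpa [Real.dist_eq] using this
    · rintro ⟨h1, h2⟩
      exact ⟨Set.mem_iInter₂.mpr fun q hq' => by simpa [Real.dist_eq] using h1 q hq',
        Set.mem_iInter₂.mpr fun y hy => by simpa [Real.dist_eq] using h2 y hy⟩
  set V' : Set (StrongDual ℝ X) :=
    {f | f ∈ Metric.closedBall (0 : StrongDual ℝ X) 1 ∧ StrongDual.toWeakDual f ∈ U'} with hV'def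
  have hV'open : IsRelWStarOpen X V' := ⟨U', hU'open, rfl⟩
  -- V' is nonempty
  have hf₀mem : g₀.comp Q ∈ V' := by
    constructor
    · exact mem_closedBall_zero_iff.mpr ((hcomp_le g₀).trans hg₀norm)
    · rw [hU'mem]
      refine ⟨fun q hq' => ?_, fun y hy => ?_⟩
      · have : (g₀.comp Q) (xq q) = g₀ q := by
          rw [ContinuousLinearMap.comp_apply, hQx, hxq]
        rw [this, sub_self, abs_zero]
        linarith
      · have hy0 : (Submodule.Quotient.mk (y : X) : X ⧸ Y) = 0 :=
          (Submodule.Quotient.mk_eq_zero Y).mpr y.2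
        have : (g₀.comp Q) (y : X) = 0 := by
          rw [ContinuousLinearMap.comp_apply, hQx, hy0, map_zero]
        rw [this, abs_zero]
        exact hη0
  -- the key approximation
  have happrox : ∀ f ∈ V', ∃ g' : StrongDual ℝ (X ⧸ Y),
      (g' ∈ V) ∧ ‖f - g'.comp Q‖ ≤ 4*η := by
    intro f hf
    obtain ⟨hfball, hfU⟩ := hf
    have hfnorm : ‖f‖ ≤ 1 := mem_closedBall_zero_iff.mp hfball
    rw [hU'mem] at hfU
    obtain ⟨hf1, hf2⟩ := hfU
    -- f is small on the unit ball of Y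
    have hYball : ∀ u : Y, ‖u‖ = 1 → |f (u : X)| ≤ 2*η := by
      intro u hu
      have hmem : u ∈ ⋃ y ∈ t, Metric.ball y η :=
        ht (mem_closedBall_zero_iff.mpr hu.le)
      rw [Set.mem_iUnion₂] at hmem
      obtain ⟨y, hy, hyu⟩ := hmem
      have h1 : |f (y : X)| < η := hf2 y hy
      have h2 : ‖(u : X) - (y : X)‖ < η := by
        have h3 := Metric.mem_ball.mp hyu
        rw [dist_eq_norm] at h3
        calc ‖(u : X) - (y : X)‖ = ‖((u - y : Y) : X)‖ := by norm_cast
        _ = ‖u - y‖ := rfl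
        _ < η := h3
      have h4 : |f ((u : X) - (y : X))| ≤ ‖f‖ * ‖(u : X) - (y : X)‖ := by
        rw [← Real.norm_eq_abs]; exact f.le_opNorm _
      have h5 : ‖f‖ * ‖(u : X) - (y : X)‖ ≤ 1 * η :=
        mul_le_mul hfnorm h2.le (norm_nonneg _) zero_le_one
      have h6 : f (u : X) = f ((u : X) - (y : X)) + f (y : X) := by
        rw [map_sub]; ring
      calc |f (u : X)| ≤ |f ((u : X) - (y : X))| + |f (y : X)| := by
            rw [h6]; exact abs_add_le _ _
      _ ≤ 2*η := by linarith
    -- restriction to Y has small norm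
    set fY : Y →L[ℝ] ℝ := f.comp Y.subtypeL with hfYdef
    have hfYnorm : ‖fY‖ ≤ 2*η := by
      apply ContinuousLinearMap.opNorm_le_of_unit_norm (by positivity)
      intro u hu
      rw [Real.norm_eq_abs]
      exact hYball u hu
    -- Hahn-Banach extension of the restriction
    obtain ⟨F, hFext, hFnorm⟩ := exists_extension_norm_eq Y fY
    have hFsmall : ‖F‖ ≤ 2*η := hFnorm.le.trans hfYnorm
    set h : StrongDual ℝ X := f - F with hhdef
    have hann : ∀ x ∈ Y, h x = 0 := by
      intro x hx
      have := hFext ⟨x, hx⟩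
      simp only [hhdef, ContinuousLinearMap.sub_apply]
      rw [show F x = fY ⟨x, hx⟩ from this]
      simp [hfYdef]
    have hhnorm : ‖h‖ ≤ 1 + 2*η := (norm_sub_le f F).trans (by linarith)
    -- lift h to a functional on the quotient
    set glin : X ⧸ Y →ₗ[ℝ] ℝ := Y.liftQ (h : X →ₗ[ℝ] ℝ)
      (fun x hx => LinearMap.mem_ker.mpr (hann x hx)) with hglindef
    have hglin : ∀ x : X, glin (Submodule.Quotient.mk x) = h x := fun x => rfl
    have hbound : ∀ q : X ⧸ Y, ‖glin q‖ ≤ ‖h‖ * ‖q‖ := by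
      intro q
      refine le_of_forall_pos_le_add fun c hc => ?_
      have hc' : (0:ℝ) < c/(‖h‖+1) := by positivity
      obtain ⟨m, hm, hmlt⟩ := Submodule.Quotient.norm_mk_lt q hc'
      have h1 : glin q = h m := by rw [← hm]; exact hglin m
      rw [h1]
      have h2 := h.le_opNorm m
      have h4 : ‖h‖ * (c/(‖h‖+1)) ≤ c := by
        calc ‖h‖ * (c/(‖h‖+1)) ≤ (‖h‖+1) * (c/(‖h‖+1)) :=
              mul_le_mul_of_nonneg_right (by linarith) hc'.le
        _ = c := by field_simp
      have h5 : ‖h‖ * ‖m‖ ≤ ‖h‖ * (‖q‖ + c/(‖h‖+1)) :=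
        mul_le_mul_of_nonneg_left hmlt.le (norm_nonneg h)
      rw [Real.norm_eq_abs]
      have h6 : |h m| ≤ ‖h‖ * ‖m‖ := by rw [← Real.norm_eq_abs]; exact h2
      nlinarith [norm_nonneg h]
    set g : StrongDual ℝ (X ⧸ Y) := glin.mkContinuous ‖h‖ hbound with hgdef
    have hgapp : ∀ x : X, g (Submodule.Quotient.mk x) = h x := fun x => hglin x
    have hgnorm : ‖g‖ ≤ ‖h‖ := LinearMap.mkContinuous_norm_le _ (norm_nonneg h) _
    have hgnorm' : ‖g‖ ≤ 1 + 2*η := hgnorm.trans hhnorm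
    -- normalize
    set g' : StrongDual ℝ (X ⧸ Y) := (1+2*η)⁻¹ • g with hg'def
    have hpos : (0:ℝ) < 1 + 2*η := by linarith
    have hg'norm : ‖g'‖ ≤ 1 := by
      rw [hg'def]
      refine (ContinuousLinearMap.opNorm_smul_le _ _).trans ?_
      rw [Real.norm_eq_abs, abs_of_pos (by positivity)]
      calc (1+2*η)⁻¹ * ‖g‖ ≤ (1+2*η)⁻¹ * (1+2*η) :=
            mul_le_mul_of_nonneg_left hgnorm' (by positivity)
      _ = 1 := by field_simp
    have hgg' : ‖g - g'‖ ≤ 2*η := by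
      have e1 : g - g' = ((1:ℝ) - (1+2*η)⁻¹) • g := by
        rw [hg'def]; ext x
        simp only [ContinuousLinearMap.sub_apply, ContinuousLinearMap.smul_apply, smul_eq_mul]; ring
      have e2 : (1:ℝ) - (1+2*η)⁻¹ = 2*η/(1+2*η) := by field_simp; ring
      rw [e1]
      refine (ContinuousLinearMap.opNorm_smul_le _ _).trans ?_
      rw [Real.norm_eq_abs, e2, abs_of_nonneg (by positivity)]
      calc 2*η/(1+2*η) * ‖g‖ ≤ 2*η/(1+2*η) * (1+2*η) :=
            mul_le_mul_of_nonneg_left hgnorm' (by positivity)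
      _ = 2*η := by field_simp
    -- f - g∘Q = F
    have hfg : f - g.comp Q = F := by
      ext x
      have : (g.comp Q) x = f x - F x := by
        rw [ContinuousLinearMap.comp_apply, hQx, hgapp, hhdef,
          ContinuousLinearMap.sub_apply]
      simp only [ContinuousLinearMap.sub_apply, this]
      ring
    have hclose : ‖f - g'.comp Q‖ ≤ 4*η := by
      have e1 : f - g'.comp Q = F + (g - g').comp Q := by
        rw [ContinuousLinearMap.sub_comp, ← hfg]; abel
      rw [e1]
      calc ‖F + (g - g').comp Q‖ ≤ ‖F‖ + ‖(g - g').comp Q‖ := norm_add_le _ _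
      _ ≤ 2*η + ‖g - g'‖ := by
          have := hcomp_le (g - g')
          linarith
      _ ≤ 4*η := by linarith
    refine ⟨g', ?_, hclose⟩
    -- g' ∈ V
    rw [hVeq]
    refine ⟨mem_closedBall_zero_iff.mpr hg'norm, ?_⟩
    apply hbasic
    intro q hqJ
    have hqM : ‖q‖ ≤ M := by
      rw [← hxq q]
      exact (Submodule.Quotient.norm_mk_le Y (xq q)).trans (hMb q hqJ)
    have e2 : |g' q - g q| ≤ 2*η*M := by
      have : g' q - g q = (g' - g) q := by
        rw [ContinuousLinearMap.sub_apply]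
      rw [this, ← Real.norm_eq_abs]
      calc ‖(g' - g) q‖ ≤ ‖g' - g‖ * ‖q‖ := (g' - g).le_opNorm q
      _ ≤ (2*η) * M := by
          exact mul_le_mul ((norm_sub_rev g' g).le.trans hgg') hqM (norm_nonneg _) (by positivity)
    have e3 : |g q - f (xq q)| ≤ 2*η*M := by
      have h1 : g q = h (xq q) := by rw [← hgapp (xq q), hxq q]
      have h2 : h (xq q) - f (xq q) = -(F (xq q)) := by
        rw [hhdef, ContinuousLinearMap.sub_apply]; ring
      rw [h1, h2, abs_neg, ← Real.norm_eq_abs]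
      calc ‖F (xq q)‖ ≤ ‖F‖ * ‖xq q‖ := F.le_opNorm _
      _ ≤ (2*η) * M := mul_le_mul hFsmall (hMb q hqJ) (norm_nonneg _) (by positivity)
    have e4 : |f (xq q) - g₀ q| < δ/2 := hf1 q hqJ
    have e5 : |g' q - g₀ q| ≤ |g' q - g q| + |g q - f (xq q)| + |f (xq q) - g₀ q| := by
      calc |g' q - g₀ q| ≤ |g' q - f (xq q)| + |f (xq q) - g₀ q| := abs_sub_le _ _ _
      _ ≤ (|g' q - g q| + |g q - f (xq q)|) + |f (xq q) - g₀ q| := by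
          have := abs_sub_le (g' q) (g q) (f (xq q))
          linarith
    show |g' q - g₀ q| < δ
    nlinarith [e2, e3, e4, e5, hηM]
  -- diameter estimate
  have hVbdd : Bornology.IsBounded V := by
    apply (Metric.isBounded_closedBall (x := (0 : StrongDual ℝ (X ⧸ Y))) (r := 1)).subset
    rw [hVeq]; exact fun f hf => hf.1
  have hdiam : Metric.diam V' ≤ ε/2 + Metric.diam V := by
    apply Metric.diam_le_of_forall_dist_le
      (add_nonneg (by linarith) Metric.diam_nonneg)
    intro f1 hf1' f2 hf2'
    obtain ⟨k1, hk1V, hk1⟩ := happrox f1 hf1'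
    obtain ⟨k2, hk2V, hk2⟩ := happrox f2 hf2'
    have hd : dist (k1.comp Q) (k2.comp Q) ≤ Metric.diam V := by
      rw [dist_eq_norm, ← ContinuousLinearMap.sub_comp]
      refine (hcomp_le _).trans ?_
      refine (dist_eq_norm k1 k2).symm.trans_le ?_
      exact Metric.dist_le_diam_of_mem hVbdd hk1V hk2V
    have d1 : dist f1 (k1.comp Q) ≤ 4*η := by rw [dist_eq_norm]; exact hk1
    have d2 : dist (k2.comp Q) f2 ≤ 4*η := by
      rw [dist_eq_norm, norm_sub_rev]; exact hk2
    calc dist f1 f2 ≤ dist f1 (k1.comp Q) + dist (k1.comp Q) (k2.comp Q) +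
          dist (k2.comp Q) f2 := dist_triangle4 _ _ _ _
    _ ≤ 4*η + Metric.diam V + 4*η := by linarith
    _ ≤ ε/2 + Metric.diam V := by linarith
  have hfinal := hrough V' hV'open ⟨g₀.comp Q, hf₀mem⟩
  have : Metric.diam V' < ε := by linarith
  linarith
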